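/- Let X be a real (n+1)×d matrix. There exists an orthonormal basis v_1, …, v_{n+1} of ℝ^{n+1} consisting of eigenvectors of X Xᵀ with eigenvalues λ_1 ≤ … ≤ λ_{n+1} in increasing order, such that for every m with 1 ≤ m ≤ n+1 the matrix V_m = [v_1 | … | v_m] minimizes ‖Xᵀ V‖_F² over all (n+1)×m matrices V with orthonormal columns, and the subspaces N_m := span(v_1, …, v_m)^⊥ are nested: N_{m+1} ⊆ N_m for all m. Consequently the best approximating subspheres S_{N_m} := S^n ∩ N_m in the projection distance satisfy S_{N_{m+1}} ⊆ S_{N_m}. -/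

import Mathlib

open scoped Matrix

private lemma pssa_filter_eq_map {N m : ℕ} (hm' : m ≤ N) :
    Finset.univ.filter (fun i : Fin N => (i : ℕ) < m)
      = Finset.map (Fin.castLEEmb hm') Finset.univ := by
  ext i
  simp only [Finset.mem_filter, Finset.mem_univ, true_and, Finset.mem_map,
    Fin.castLEEmb_apply]
  constructor
  · intro h; exact ⟨⟨i, h⟩, rfl⟩
  · rintro ⟨j, rfl⟩; exact j.isLt

private lemma pssa_rearrange {N m : ℕ} (hm : 1 ≤ m) (hm' : m ≤ N)
    (μ c : Fin N → ℝ) (hmono : Monotone μ)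
    (hc0 : ∀ i, 0 ≤ c i) (hc1 : ∀ i, c i ≤ 1)
    (hsum : ∑ i, c i = m) :
    ∑ i ∈ Finset.univ.filter (fun i : Fin N => (i : ℕ) < m), μ i ≤ ∑ i, μ i * c i := by
  have hN : 0 < N := lt_of_lt_of_le hm hm'
  set t : ℝ := μ ⟨m - 1, by omega⟩ with ht
  set b : Fin N → ℝ := fun i => if (i : ℕ) < m then 1 else 0 with hb
  have hcard : (Finset.univ.filter (fun i : Fin N => (i : ℕ) < m)).card = m := by
    rw [pssa_filter_eq_map hm', Finset.card_map, Finset.card_univ, Fintype.card_fin]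
  have hbsum : ∑ i, b i = m := by
    simp only [hb, Finset.sum_boole]
    rw [hcard]
  have hkey : ∀ i : Fin N, t * (c i - b i) ≤ μ i * (c i - b i) := by
    intro i
    by_cases h : (i : ℕ) < m
    · have h1 : c i - b i ≤ 0 := by simp [hb, h, hc1 i]
      have h2 : μ i ≤ t := hmono (by simp only [Fin.le_def]; omega)
      nlinarith
    · have h1 : 0 ≤ c i - b i := by simp [hb, h, hc0 i]
      have h2 : t ≤ μ i := hmono (by simp only [Fin.le_def]; omega)
      nlinarith
  have hfil : ∑ i ∈ Finset.univ.filter (fun i : Fin N => (i : ℕ) < m), μ i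
      = ∑ i, μ i * b i := by
    rw [Finset.sum_filter]
    refine Finset.sum_congr rfl fun i _ => ?_
    by_cases h : (i : ℕ) < m <;> simp [hb, h]
  have h0 : (0:ℝ) ≤ ∑ i, (μ i * (c i - b i)) := by
    calc (0:ℝ) = ∑ i, t * (c i - b i) := by
          rw [← Finset.mul_sum, Finset.sum_sub_distrib, hsum, hbsum]; ring
      _ ≤ _ := Finset.sum_le_sum fun i _ => hkey i
  have hsplit : ∑ i, μ i * (c i - b i) = ∑ i, μ i * c i - ∑ i, μ i * b i := by
    rw [← Finset.sum_sub_distrib]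
    exact Finset.sum_congr rfl fun i _ => by ring
  rw [hfil]
  linarith [hsplit ▸ h0]

/-- Squared Frobenius norm of a real matrix. -/
noncomputable def frobSq {α β : Type*} [Fintype α] [Fintype β]
    (M : Matrix α β ℝ) : ℝ :=
  ∑ i, ∑ j, (M i j) ^ 2

theorem pssa_sphere_nested (n d : ℕ) (X : Matrix (Fin (n + 1)) (Fin d) ℝ) :
    ∃ (u : Fin (n + 1) → EuclideanSpace ℝ (Fin (n + 1))) (μ : Fin (n + 1) → ℝ),
      Orthonormal ℝ u ∧ Monotone μ ∧
      (∀ i, (X * Xᵀ).mulVec (u i) = μ i • u i) ∧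
      (∀ (m : ℕ) (_ : 1 ≤ m) (hm' : m ≤ n + 1),
        ∀ V : Matrix (Fin (n + 1)) (Fin m) ℝ, Vᵀ * V = 1 →
          frobSq (Xᵀ * Matrix.of (fun i (j : Fin m) => u (Fin.castLE hm' j) i)) ≤
            frobSq (Xᵀ * V)) ∧
      (∀ m : ℕ,
        (Submodule.span ℝ (u '' {i : Fin (n + 1) | (i : ℕ) < m + 1}))ᗮ ≤
          (Submodule.span ℝ (u '' {i : Fin (n + 1) | (i : ℕ) < m}))ᗮ) ∧
      (∀ m : ℕ,
        {x : EuclideanSpace ℝ (Fin (n + 1)) | ‖x‖ = 1 ∧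
            x ∈ (Submodule.span ℝ (u '' {i : Fin (n + 1) | (i : ℕ) < m + 1}))ᗮ} ⊆
          {x : EuclideanSpace ℝ (Fin (n + 1)) | ‖x‖ = 1 ∧
            x ∈ (Submodule.span ℝ (u '' {i : Fin (n + 1) | (i : ℕ) < m}))ᗮ}) := by
  classical
  have hA : (X * Xᵀ).IsHermitian := by
    have h := Matrix.isHermitian_mul_conjTranspose_self X
    simpa using h
  set A := X * Xᵀ with hAdef
  have hAsym : Aᵀ = A := by
    ext i j; rw [Matrix.transpose_apply, ← hA.apply i j]; simp [Matrix.conjTranspose_apply]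
  set σ := Tuple.sort hA.eigenvalues with hσ
  set B := hA.eigenvectorBasis.reindex σ.symm with hB
  set μ : Fin (n + 1) → ℝ := fun i => hA.eigenvalues (σ i) with hμ
  have hmono : Monotone μ := Tuple.monotone_sort hA.eigenvalues
  have heigen : ∀ i, A *ᵥ (B i) = μ i • (B i) := by
    intro i
    rw [hB, OrthonormalBasis.reindex_apply]
    exact hA.mulVec_eigenvectorBasis (σ i)
  -- inner product vs dot product
  have hinner : ∀ x y : EuclideanSpace ℝ (Fin (n + 1)), (inner ℝ x y : ℝ) = x ⬝ᵥ y := by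
    intro x y
    simp [PiLp.inner_apply, RCLike.inner_apply, dotProduct, mul_comm]
  have hite : ∀ i j, (inner ℝ (B i) (B j) : ℝ) = if i = j then 1 else 0 :=
    orthonormal_iff_ite.mp B.orthonormal
  -- the quadratic form
  set Q : EuclideanSpace ℝ (Fin (n + 1)) → ℝ := fun w => ∑ k, ((Xᵀ) *ᵥ w) k ^ 2 with hQdef
  have hQdot : ∀ w : EuclideanSpace ℝ (Fin (n + 1)), Q w = w ⬝ᵥ (A *ᵥ w) := by
    intro w
    have h1 : Q w = (Xᵀ *ᵥ w) ⬝ᵥ (Xᵀ *ᵥ w) := by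
      simp [hQdef, dotProduct, sq]
    rw [h1, Matrix.dotProduct_mulVec, ← Matrix.mulVec_transpose,
      Matrix.transpose_transpose, Matrix.mulVec_mulVec, dotProduct_comm]
  -- symmetric action on eigenvectors inside inner products
  have hBz : ∀ (i : Fin (n + 1)) (w : EuclideanSpace ℝ (Fin (n + 1))),
      (inner ℝ (B i) (WithLp.toLp 2 (A *ᵥ w)) : ℝ)
        = μ i * (inner ℝ (B i) w : ℝ) := by
    intro i w
    rw [hinner, hinner, Matrix.dotProduct_mulVec, ← Matrix.mulVec_transpose, hAsym,
      heigen i, smul_dotProduct]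
    simp
  -- spectral expansion of Q
  have hQ : ∀ w : EuclideanSpace ℝ (Fin (n + 1)),
      Q w = ∑ i, μ i * (inner ℝ (B i) w : ℝ) ^ 2 := by
    intro w
    have h2 : (inner ℝ w (WithLp.toLp 2 (A *ᵥ w)) : ℝ)
        = ∑ i, (inner ℝ w (B i) : ℝ) * (inner ℝ (B i)
            (WithLp.toLp 2 (A *ᵥ w)) : ℝ) :=
      (B.sum_inner_mul_inner w _).symm
    rw [hQdot w, ← hinner w _, h2]
    refine Finset.sum_congr rfl fun i _ => ?_
    rw [hBz i w, real_inner_comm w (B i)]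
    ring
  -- Q on basis vectors
  have hQB : ∀ l, Q (B l) = μ l := by
    intro l
    rw [hQ]
    have hterm : ∀ i ∈ Finset.univ, μ i * (inner ℝ (B i) (B l) : ℝ) ^ 2
        = if i = l then μ i else 0 := by
      intro i _
      rw [hite i l]
      by_cases h : i = l <;> simp [h]
    rw [Finset.sum_congr rfl hterm, Finset.sum_ite_eq']
    simp
  -- column decomposition of frobSq
  have hfrob : ∀ (m : ℕ) (W : Matrix (Fin (n + 1)) (Fin m) ℝ),
      frobSq (Xᵀ * W) = ∑ j, Q (WithLp.toLp 2 (fun a => W a j)) := by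
    intro m W
    rw [frobSq, Finset.sum_comm]
    refine Finset.sum_congr rfl fun j _ => Finset.sum_congr rfl fun i _ => ?_
    simp [Matrix.mul_apply, Matrix.mulVec, dotProduct, hQdef]
  have hnest : ∀ m : ℕ,
      (Submodule.span ℝ ((fun i => B i) '' {i : Fin (n + 1) | (i : ℕ) < m + 1}))ᗮ ≤
        (Submodule.span ℝ ((fun i => B i) '' {i : Fin (n + 1) | (i : ℕ) < m}))ᗮ :=
    fun m => Submodule.orthogonal_le (Submodule.span_mono
      (Set.image_mono fun i hi => Nat.lt_succ_of_lt hi))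
  refine ⟨fun i => B i, μ, B.orthonormal, hmono, heigen, ?_, hnest,
    fun m x hx => ⟨hx.1, hnest m hx.2⟩⟩
  intro m hm hm' V hV
  -- columns of V are orthonormal
  set vcol : Fin m → EuclideanSpace ℝ (Fin (n + 1)) := fun j => WithLp.toLp 2 (fun a => V a j) with hvcol
  have hVorth : Orthonormal ℝ vcol := by
    rw [orthonormal_iff_ite]
    intro j k
    rw [hinner]
    have h1 : (Vᵀ * V) j k = (1 : Matrix (Fin m) (Fin m) ℝ) j k := by rw [hV]
    simpa [Matrix.mul_apply, Matrix.one_apply, dotProduct,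
      Matrix.transpose_apply, hvcol] using h1
  set c : Fin (n + 1) → ℝ := fun i => ∑ j, (inner ℝ (B i) (vcol j) : ℝ) ^ 2 with hc
  have hc0 : ∀ i, 0 ≤ c i := fun i => Finset.sum_nonneg fun j _ => sq_nonneg _
  have hc1 : ∀ i, c i ≤ 1 := by
    intro i
    have hb := Orthonormal.sum_inner_products_le (𝕜 := ℝ) (B i) hVorth
      (s := Finset.univ)
    have hnorm : ‖B i‖ = 1 := B.orthonormal.1 i
    calc c i = ∑ j, ‖(inner ℝ (vcol j) (B i) : ℝ)‖ ^ 2 := by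
          refine Finset.sum_congr rfl fun j _ => ?_
          rw [real_inner_comm (B i) (vcol j), Real.norm_eq_abs, sq_abs]
      _ ≤ ‖B i‖ ^ 2 := hb
      _ = 1 := by rw [hnorm]; norm_num
  have hpars : ∀ j, ∑ i, (inner ℝ (B i) (vcol j) : ℝ) ^ 2 = 1 := by
    intro j
    have h := B.sum_inner_mul_inner (vcol j) (vcol j)
    have h2 : (inner ℝ (vcol j) (vcol j) : ℝ) = 1 := by
      have := orthonormal_iff_ite.mp hVorth j j
      simpa using this
    calc ∑ i, (inner ℝ (B i) (vcol j) : ℝ) ^ 2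
        = ∑ i, (inner ℝ (vcol j) (B i) : ℝ) * (inner ℝ (B i) (vcol j) : ℝ) := by
          refine Finset.sum_congr rfl fun i _ => ?_
          rw [real_inner_comm (vcol j) (B i), sq]
      _ = 1 := by rw [h, h2]
  have hcsum : ∑ i, c i = m := by
    calc ∑ i, c i = ∑ i, ∑ j, (inner ℝ (B i) (vcol j) : ℝ) ^ 2 := rfl
      _ = ∑ j, ∑ i, (inner ℝ (B i) (vcol j) : ℝ) ^ 2 := Finset.sum_comm
      _ = ∑ _j : Fin m, (1 : ℝ) := Finset.sum_congr rfl fun j _ => hpars j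
      _ = m := by simp
  have hfV : frobSq (Xᵀ * V) = ∑ i, μ i * c i := by
    rw [hfrob m V]
    calc ∑ j, Q (vcol j) = ∑ j, ∑ i, μ i * (inner ℝ (B i) (vcol j) : ℝ) ^ 2 :=
          Finset.sum_congr rfl fun j _ => hQ (vcol j)
      _ = ∑ i, ∑ j, μ i * (inner ℝ (B i) (vcol j) : ℝ) ^ 2 := Finset.sum_comm
      _ = ∑ i, μ i * c i := by
          refine Finset.sum_congr rfl fun i _ => ?_
          rw [hc, Finset.mul_sum]
  have hbase : frobSq (Xᵀ * Matrix.of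
      (fun i (j : Fin m) => (fun i' => B i') (Fin.castLE hm' j) i))
      = ∑ i ∈ Finset.univ.filter (fun i : Fin (n + 1) => (i : ℕ) < m), μ i := by
    rw [hfrob m _]
    calc ∑ j : Fin m, Q (B (Fin.castLE hm' j))
        = ∑ j : Fin m, μ (Fin.castLE hm' j) :=
          Finset.sum_congr rfl fun j _ => hQB _
      _ = ∑ i ∈ Finset.univ.filter (fun i : Fin (n + 1) => (i : ℕ) < m), μ i := by
          rw [pssa_filter_eq_map hm', Finset.sum_map]
          simp [Fin.castLEEmb_apply]
  rw [hbase, hfV]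
  exact pssa_rearrange hm hm' μ c hmono hc0 hc1 hcsum
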